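/- Let E be a vector bundle on ℙ¹×ℙ¹ with p: ℙ¹×ℙ¹ → ℙ¹ the first projection, and suppose for some n that E(0,n) has cohomology only in degree 1 (H⁰(E(0,n)) = H²(E(0,n)) = 0) and E(1,n) has cohomology only in degree 0 (H¹(E(1,n)) = H²(E(1,n)) = 0). Then R¹p_*(E(0,n)) = 0 and F = p_*(E(0,n)) is a vector bundle on ℙ¹ isomorphic to a direct sum of copies of O(-1) and O(-2); in particular F(m) has natural cohomology (cohomology in at most one degree) for every m ∈ ℤ. -/
import Mathlib


/-- A coherent sheaf on `ℙ¹` decomposes as (torsion of length `t`) ⊕ `⊕ᵢ O(d i)`.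
`dim H⁰(F(m)) = t + ∑ᵢ max(d i + m + 1, 0)` (torsion contributes its length in every
twist, `h⁰(O(d)) = max(d+1,0)`). -/
def h0Coh (t : ℕ) {k : ℕ} (d : Fin k → ℤ) (m : ℤ) : ℕ := t + ∑ i, (d i + m + 1).toNat

/-- `dim H¹(F(m)) = ∑ᵢ max(-(d i + m) - 1, 0)` for such a coherent sheaf on `ℙ¹`. -/
def h1Coh (_t : ℕ) {k : ℕ} (d : Fin k → ℤ) (m : ℤ) : ℕ := ∑ i, (-(d i + m) - 1).toNat

/-- Let `E` be a vector bundle on `ℙ¹×ℙ¹`, `p` the first projection, and write the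
coherent sheaves `p_*(E(0,n))` and `R¹p_*(E(0,n))` on `ℙ¹` in the form
(torsion of length `t`) ⊕ `⊕ O(d i)`, with data `(t₀, d₀)` and `(t₁, d₁)` respectively.
Let `e i m = dim Hⁱ(E(m,n))`; by the projection formula and the Künneth/Leray formula
`e 0 m = h⁰(F₀(m))`, `e 1 m = h¹(F₀(m)) + h⁰(F₁(m))`, `e 2 m = h¹(F₁(m))`.
If `E(0,n)` has cohomology only in degree 1 and `E(1,n)` only in degree 0, then
`R¹p_*(E(0,n)) = 0` and `F₀ = p_*(E(0,n))` is a vector bundle which is a direct sum of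
copies of `O(-1)` and `O(-2)`; in particular every twist `F₀(m)` has cohomology in at
most one degree. -/
theorem pushforward_vanishing_and_splitting
    (t₀ t₁ k₀ k₁ : ℕ) (d₀ : Fin k₀ → ℤ) (d₁ : Fin k₁ → ℤ)
    (e : ℕ → ℤ → ℕ)
    (kunneth0 : ∀ m : ℤ, e 0 m = h0Coh t₀ d₀ m)
    (kunneth1 : ∀ m : ℤ, e 1 m = h1Coh t₀ d₀ m + h0Coh t₁ d₁ m)
    (kunneth2 : ∀ m : ℤ, e 2 m = h1Coh t₁ d₁ m)
    (hE0n_only_H1 : e 0 0 = 0 ∧ e 2 0 = 0)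
    (hE1n_only_H0 : e 1 1 = 0 ∧ e 2 1 = 0) :
    (t₁ = 0 ∧ k₁ = 0) ∧ t₀ = 0 ∧ (∀ i, d₀ i = -1 ∨ d₀ i = -2) ∧
      (∀ m : ℤ, h0Coh t₀ d₀ m = 0 ∨ h1Coh t₀ d₀ m = 0) := by
  obtain ⟨h00, h20⟩ := hE0n_only_H1
  obtain ⟨h11, h21⟩ := hE1n_only_H0
  rw [kunneth0, h0Coh] at h00
  rw [kunneth1] at h11
  rw [kunneth2, h1Coh] at h20
  have ht₀ : t₀ = 0 := by omega
  have hsum0 : ∑ i, (d₀ i + (0:ℤ) + 1).toNat = 0 := by omega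
  have hd0le : ∀ i, d₀ i ≤ -1 := by
    intro i
    have := Finset.sum_eq_zero_iff.mp hsum0 i (Finset.mem_univ i)
    omega
  have h1z : h1Coh t₀ d₀ 1 = 0 ∧ h0Coh t₁ d₁ 1 = 0 := by
    constructor <;> omega
  have ht₁ : t₁ = 0 := by
    have := h1z.2; rw [h0Coh] at this; omega
  have hd0ge : ∀ i, -2 ≤ d₀ i := by
    intro i
    have := h1z.1; rw [h1Coh] at this
    have := Finset.sum_eq_zero_iff.mp this i (Finset.mem_univ i)
    omega
  have hk₁ : k₁ = 0 := by
    by_contra h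
    obtain ⟨i⟩ : Nonempty (Fin k₁) := ⟨⟨0, Nat.pos_of_ne_zero h⟩⟩
    have hle : d₁ i ≤ -2 := by
      have := h1z.2; rw [h0Coh] at this
      have := Finset.sum_eq_zero_iff.mp (by omega : ∑ j, (d₁ j + (1:ℤ) + 1).toNat = 0) i (Finset.mem_univ i)
      omega
    have hge := Finset.sum_eq_zero_iff.mp h20 i (Finset.mem_univ i)
    omega
  refine ⟨⟨ht₁, hk₁⟩, ht₀, fun i => by have := hd0le i; have := hd0ge i; omega, fun m => ?_⟩
  rcases le_or_gt m 0 with hm | hm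
  · left
    rw [h0Coh, ht₀]
    simp only [Nat.zero_add]
    apply Finset.sum_eq_zero
    intro i _
    have := hd0le i
    omega
  · right
    rw [h1Coh]
    apply Finset.sum_eq_zero
    intro i _
    have := hd0ge i
    omega
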